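/- Let B be a d×d real matrix with B^T + B ≤ 0. Then B is Hurwitz (all eigenvalues have negative real part) if and only if V = {x : ‖e^{tB}x‖ = ‖x‖ for all t ∈ R} equals {0}. -/

import Mathlib

open Matrix

/-- The Euclidean norm on `ℝ^d`. -/
noncomputable def eNorm {d : ℕ} (x : Fin d → ℝ) : ℝ := Real.sqrt (x ⬝ᵥ x)

namespace HurwitzAux

open NormedSpace

variable {d : ℕ}

/-- mulVec as a continuous linear map in the matrix argument, applied to fixed x -/
noncomputable def mvCLM (x : Fin d → ℝ) : Matrix (Fin d) (Fin d) ℝ →L[ℝ] (Fin d → ℝ) :=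
  LinearMap.toContinuousLinearMap
  { toFun := fun M => M *ᵥ x
    map_add' := fun M N => Matrix.add_mulVec M N x
    map_smul' := fun c M => Matrix.smul_mulVec c M x }

lemma mvCLM_apply (x : Fin d → ℝ) (M : Matrix (Fin d) (Fin d) ℝ) : mvCLM x M = M *ᵥ x := rfl

lemma hasDerivAt_traj (B : Matrix (Fin d) (Fin d) ℝ) (x : Fin d → ℝ) (t : ℝ) :
    HasDerivAt (fun s : ℝ => exp (s • B) *ᵥ x) (B *ᵥ (exp (t • B) *ᵥ x)) t := by
  letI : SeminormedRing (Matrix (Fin d) (Fin d) ℝ) := Matrix.linftyOpSemiNormedRing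
  letI : NormedRing (Matrix (Fin d) (Fin d) ℝ) := Matrix.linftyOpNormedRing
  letI : NormedAlgebra ℝ (Matrix (Fin d) (Fin d) ℝ) := Matrix.linftyOpNormedAlgebra
  have h := hasDerivAt_exp_smul_const' (𝕂 := ℝ) B t
  have h2 := ((mvCLM x).hasFDerivAt).comp_hasDerivAt t h
  rw [Matrix.mulVec_mulVec]
  exact h2

lemma hasDerivAt_dot {y y' : ℝ → Fin d → ℝ} {t : ℝ}
    (h : HasDerivAt y (y' t) t) :
    HasDerivAt (fun s => y s ⬝ᵥ y s) (y' t ⬝ᵥ y t + y t ⬝ᵥ y' t) t := by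
  have hc : ∀ i : Fin d, HasDerivAt (fun s => y s i) (y' t i) t := fun i =>
    ((ContinuousLinearMap.proj (R := ℝ) (φ := fun _ : Fin d => ℝ) i).hasFDerivAt).comp_hasDerivAt t h
  have h3 : HasDerivAt (fun s => ∑ i, y s i * y s i)
      (∑ i, (y' t i * y t i + y t i * y' t i)) t :=
    HasDerivAt.fun_sum (fun i _ => (hc i).mul (hc i))
  simpa [dotProduct, Finset.sum_add_distrib] using h3

lemma mulVec_exp_eq_zero {A B : Matrix (Fin d) (Fin d) ℝ} {x : Fin d → ℝ}
    (h : ∀ k : ℕ, A *ᵥ ((B ^ k) *ᵥ x) = 0) (t : ℝ) :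
    A *ᵥ (exp (t • B) *ᵥ x) = 0 := by
  letI : SeminormedRing (Matrix (Fin d) (Fin d) ℝ) := Matrix.linftyOpSemiNormedRing
  letI : NormedRing (Matrix (Fin d) (Fin d) ℝ) := Matrix.linftyOpNormedRing
  letI : NormedAlgebra ℝ (Matrix (Fin d) (Fin d) ℝ) := Matrix.linftyOpNormedAlgebra
  have hsum : Summable (fun n : ℕ => ((Nat.factorial n : ℝ))⁻¹ • (t • B) ^ n) :=
    expSeries_summable' (𝕂 := ℝ) (t • B)
  have hexp : exp (t • B) = ∑' n : ℕ, ((Nat.factorial n : ℝ))⁻¹ • (t • B) ^ n :=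
    congrFun (exp_eq_tsum (𝕂 := ℝ)) (t • B)
  have key : A *ᵥ (exp (t • B) *ᵥ x) = mvCLM x (A * exp (t • B)) := by
    simp [mvCLM_apply, Matrix.mulVec_mulVec]
  let LA : Matrix (Fin d) (Fin d) ℝ →L[ℝ] Matrix (Fin d) (Fin d) ℝ :=
    LinearMap.toContinuousLinearMap (LinearMap.mulLeft ℝ A)
  have hLA : ∀ M, LA M = A * M := fun M => rfl
  rw [key, hexp]
  have hmul : A * (∑' n : ℕ, ((Nat.factorial n : ℝ))⁻¹ • (t • B) ^ n)
      = ∑' n : ℕ, A * (((Nat.factorial n : ℝ))⁻¹ • (t • B) ^ n) :=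
    by simpa [hLA] using ContinuousLinearMap.map_tsum LA hsum
  have hsum2 : Summable (fun n : ℕ => A * (((Nat.factorial n : ℝ))⁻¹ • (t • B) ^ n)) := by
    simpa [hLA] using ContinuousLinearMap.summable LA hsum
  rw [hmul, ContinuousLinearMap.map_tsum (mvCLM x) hsum2]
  have hzero : ∀ n : ℕ, mvCLM x (A * (((Nat.factorial n : ℝ))⁻¹ • (t • B) ^ n)) = 0 := by
    intro n
    have : A * (((Nat.factorial n : ℝ))⁻¹ • (t • B) ^ n)
        = (((Nat.factorial n : ℝ))⁻¹ * t ^ n) • (A * B ^ n) := by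
      rw [smul_pow, mul_smul_comm, mul_smul_comm, smul_smul]
    rw [mvCLM_apply, this, Matrix.smul_mulVec, ← Matrix.mulVec_mulVec, h n, smul_zero]
  rw [tsum_congr hzero, tsum_zero]

lemma dot_self_nonneg (v : Fin d → ℝ) : 0 ≤ v ⬝ᵥ v :=
  Finset.sum_nonneg fun i _ => mul_self_nonneg (v i)

lemma deriv_val (B : Matrix (Fin d) (Fin d) ℝ) (y : Fin d → ℝ) :
    (B *ᵥ y) ⬝ᵥ y + y ⬝ᵥ (B *ᵥ y) = y ⬝ᵥ ((Bᵀ + B) *ᵥ y) := by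
  rw [Matrix.add_mulVec, dotProduct_add, Matrix.mulVec_transpose]
  simp [Matrix.dotProduct_mulVec, dotProduct_comm]

lemma ker_of_dot_zero {B : Matrix (Fin d) (Fin d) ℝ}
    (hB : ∀ x : Fin d → ℝ, x ⬝ᵥ ((Bᵀ + B).mulVec x) ≤ 0) {y : Fin d → ℝ}
    (h : y ⬝ᵥ ((Bᵀ + B) *ᵥ y) = 0) : (Bᵀ + B) *ᵥ y = 0 := by
  have hherm : (-(Bᵀ + B)).IsHermitian := by
    unfold Matrix.IsHermitian
    rw [conjTranspose_neg]
    congr 1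
    ext i j
    simp [Matrix.conjTranspose_apply, Matrix.transpose_apply, add_comm]
  have hps : (-(Bᵀ + B)).PosSemidef := by
    refine Matrix.PosSemidef.of_dotProduct_mulVec_nonneg hherm fun z => ?_
    have := hB z
    simp only [Matrix.neg_mulVec, dotProduct_neg, star_trivial]
    linarith
  have := (hps.dotProduct_mulVec_zero_iff y).mp (by
    simp only [Matrix.neg_mulVec, dotProduct_neg, star_trivial, h, neg_zero])
  rw [Matrix.neg_mulVec] at this
  simpa [neg_eq_zero] using this

lemma traj_zero (B : Matrix (Fin d) (Fin d) ℝ) (x : Fin d → ℝ) :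
    exp ((0:ℝ) • B) *ᵥ x = x := by
  letI : SeminormedRing (Matrix (Fin d) (Fin d) ℝ) := Matrix.linftyOpSemiNormedRing
  letI : NormedRing (Matrix (Fin d) (Fin d) ℝ) := Matrix.linftyOpNormedRing
  letI : NormedAlgebra ℝ (Matrix (Fin d) (Fin d) ℝ) := Matrix.linftyOpNormedAlgebra
  rw [zero_smul, exp_zero, Matrix.one_mulVec]

lemma analysis_main (B : Matrix (Fin d) (Fin d) ℝ)
    (hB : ∀ x : Fin d → ℝ, x ⬝ᵥ ((Bᵀ + B).mulVec x) ≤ 0) (x : Fin d → ℝ) :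
    (∀ t : ℝ, eNorm (exp (t • B) *ᵥ x) = eNorm x) ↔
      (∀ k : ℕ, (Bᵀ + B) *ᵥ ((B ^ k) *ᵥ x) = 0) := by
  set A := Bᵀ + B with hA
  set y : ℝ → Fin d → ℝ := fun t => exp (t • B) *ᵥ x with hy
  have hyd : ∀ t, HasDerivAt y (B *ᵥ y t) t := fun t => hasDerivAt_traj B x t
  have hgd : ∀ t, HasDerivAt (fun s => y s ⬝ᵥ y s) (y t ⬝ᵥ (A *ᵥ y t)) t := by
    intro t
    have := hasDerivAt_dot (y := y) (y' := fun t => B *ᵥ y t) (hyd t)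
    rwa [deriv_val] at this
  constructor
  · intro h
    -- norm preserved implies dot product constant
    have hg : ∀ t, y t ⬝ᵥ y t = x ⬝ᵥ x := by
      intro t
      have h1 := h t
      unfold eNorm at h1
      exact (Real.sqrt_inj (dot_self_nonneg _) (dot_self_nonneg _)).mp h1
    have hgconst : (fun s => y s ⬝ᵥ y s) = fun _ => x ⬝ᵥ x := funext hg
    have hdz : ∀ t, y t ⬝ᵥ (A *ᵥ y t) = 0 := by
      intro t
      have h0 : HasDerivAt (fun s => y s ⬝ᵥ y s) 0 t := by
        rw [hgconst]; exact hasDerivAt_const t _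
      exact (hgd t).unique h0
    have hAy : ∀ t, A *ᵥ y t = 0 := fun t => ker_of_dot_zero hB (hdz t)
    have main : ∀ k : ℕ, ∀ t : ℝ, A *ᵥ ((B ^ k) *ᵥ y t) = 0 := by
      intro k
      induction k with
      | zero => intro t; simpa [Matrix.one_mulVec] using hAy t
      | succ k ih =>
        intro t
        set Lk : (Fin d → ℝ) →L[ℝ] (Fin d → ℝ) :=
          LinearMap.toContinuousLinearMap (A * B ^ k).mulVecLin with hLk
        have hLka : ∀ v, Lk v = A *ᵥ ((B ^ k) *ᵥ v) := by
          intro v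
          show (A * B ^ k).mulVecLin v = _
          rw [Matrix.mulVecLin_apply, ← Matrix.mulVec_mulVec]
        have hd : HasDerivAt (fun s => Lk (y s)) (Lk (B *ᵥ y t)) t :=
          Lk.hasFDerivAt.comp_hasDerivAt t (hyd t)
        have hzero : (fun s => Lk (y s)) = fun _ => 0 := by
          funext s; rw [hLka, ih s]
        have h0 : HasDerivAt (fun s => Lk (y s)) 0 t := by
          rw [hzero]; exact hasDerivAt_const t _
        have := hd.unique h0
        rw [hLka] at this
        rw [Matrix.mulVec_mulVec, Matrix.mulVec_mulVec, mul_assoc, ← pow_succ, ← Matrix.mulVec_mulVec] at this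
        exact this
    intro k
    have := main k 0
    rwa [show y 0 = x from traj_zero B x] at this
  · intro h t
    have hAy : ∀ s : ℝ, A *ᵥ y s = 0 := fun s => mulVec_exp_eq_zero h s
    have hder0 : ∀ s, HasDerivAt (fun u => y u ⬝ᵥ y u) 0 s := by
      intro s
      have := hgd s
      rwa [hAy s, dotProduct_zero] at this
    have hconst : y t ⬝ᵥ y t = y 0 ⬝ᵥ y 0 := by
      have hdiff : Differentiable ℝ (fun u => y u ⬝ᵥ y u) :=
        fun s => (hder0 s).differentiableAt
      have : ∀ s, deriv (fun u => y u ⬝ᵥ y u) s = 0 := fun s => (hder0 s).deriv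
      exact is_const_of_deriv_eq_zero hdiff this t 0
    unfold eNorm
    rw [hconst, show y 0 = x from traj_zero B x]

-- complexification helpers
local notation "cf" => (fun r : ℝ => (r : ℂ))

lemma map_pow_c (M : Matrix (Fin d) (Fin d) ℝ) (k : ℕ) :
    (M.map cf) ^ k = (M ^ k).map cf := by
  have : M.map cf = Complex.ofRealHom.mapMatrix M := rfl
  rw [this, ← map_pow]
  rfl

lemma mulVec_map_re (M : Matrix (Fin d) (Fin d) ℝ) (z : Fin d → ℂ) (i : Fin d) :
    ((M.map cf *ᵥ z) i).re = (M *ᵥ fun j => (z j).re) i := by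
  simp [Matrix.mulVec, dotProduct, Complex.re_sum, Complex.mul_re]

lemma mulVec_map_im (M : Matrix (Fin d) (Fin d) ℝ) (z : Fin d → ℂ) (i : Fin d) :
    ((M.map cf *ᵥ z) i).im = (M *ᵥ fun j => (z j).im) i := by
  simp [Matrix.mulVec, dotProduct, Complex.im_sum, Complex.mul_im]

lemma mulVec_map_ofReal (M : Matrix (Fin d) (Fin d) ℝ) (v : Fin d → ℝ) :
    (M.map cf) *ᵥ (fun i => (v i : ℂ)) = fun i => ((M *ᵥ v) i : ℂ) := by
  ext i
  simp [Matrix.mulVec, dotProduct]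

lemma star_dot_self_eq (z : Fin d → ℂ) :
    star z ⬝ᵥ z = ((∑ i, Complex.normSq (z i) : ℝ) : ℂ) := by
  push_cast
  simp [dotProduct, Pi.star_apply, Complex.star_def, Complex.normSq_eq_conj_mul_self]

lemma mulVec_star_comm (M : Matrix (Fin d) (Fin d) ℝ) (z : Fin d → ℂ) :
    (M.map cf) *ᵥ (star z) = star ((M.map cf) *ᵥ z) := by
  ext i
  simp [Matrix.mulVec, dotProduct, star_sum, Complex.star_def, _root_.map_mul,
    Complex.conj_ofReal]

lemma eig_dot (B : Matrix (Fin d) (Fin d) ℝ) {μ : ℂ} {z : Fin d → ℂ}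
    (hz : (B.map cf) *ᵥ z = μ • z) :
    star z ⬝ᵥ (((Bᵀ + B).map cf) *ᵥ z)
      = (μ + (starRingEnd ℂ) μ) * (star z ⬝ᵥ z) := by
  have hmapadd : (Bᵀ + B).map cf = (B.map cf)ᵀ + B.map cf := by
    ext i j; simp [Matrix.map_apply, Matrix.transpose_apply]
  rw [hmapadd, Matrix.add_mulVec, dotProduct_add]
  have h1 : star z ⬝ᵥ ((B.map cf)ᵀ *ᵥ z) = (starRingEnd ℂ) μ * (star z ⬝ᵥ z) := by
    rw [Matrix.dotProduct_mulVec, Matrix.vecMul_transpose, mulVec_star_comm, hz,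
      star_smul, smul_dotProduct]
    rfl
  have h2 : star z ⬝ᵥ ((B.map cf) *ᵥ z) = μ * (star z ⬝ᵥ z) := by
    rw [hz, dotProduct_smul]
    rfl
  rw [h1, h2]; ring

lemma mem_spectrum_of_eig {M : Matrix (Fin d) (Fin d) ℂ} {μ : ℂ} {z : Fin d → ℂ}
    (hz : z ≠ 0) (he : M *ᵥ z = μ • z) : μ ∈ spectrum ℂ M := by
  rw [← AlgEquiv.spectrum_eq (Matrix.toLinAlgEquiv' (R := ℂ) (n := Fin d)) M]
  refine Module.End.hasEigenvalue_iff_mem_spectrum.mp ?_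
  refine Module.End.hasEigenvalue_of_hasEigenvector (x := z) ⟨?_, hz⟩
  rw [Module.End.mem_eigenspace_iff, Matrix.toLinAlgEquiv'_apply, he]

lemma eig_of_mem_spectrum {M : Matrix (Fin d) (Fin d) ℂ} {μ : ℂ}
    (h : μ ∈ spectrum ℂ M) : ∃ z : Fin d → ℂ, z ≠ 0 ∧ M *ᵥ z = μ • z := by
  rw [← AlgEquiv.spectrum_eq (Matrix.toLinAlgEquiv' (R := ℂ) (n := Fin d)) M] at h
  have := Module.End.hasEigenvalue_iff_mem_spectrum.mpr h
  obtain ⟨z, hz⟩ := this.exists_hasEigenvector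
  exact ⟨z, hz.right, by rw [← Matrix.toLinAlgEquiv'_apply, hz.apply_eq_smul]⟩

lemma exists_imaginary_eig {B : Matrix (Fin d) (Fin d) ℝ} {x : Fin d → ℝ} (hx : x ≠ 0)
    (hW : ∀ k : ℕ, (Bᵀ + B) *ᵥ ((B ^ k) *ᵥ x) = 0) :
    ∃ μ : ℂ, μ ∈ spectrum ℂ (B.map cf) ∧ μ.re = 0 := by
  set Bc := B.map cf with hBc
  set Ac := (Bᵀ + B).map cf with hAc
  set Wc : Submodule ℂ (Fin d → ℂ) :=
    { carrier := {z | ∀ k : ℕ, Ac *ᵥ ((Bc ^ k) *ᵥ z) = 0}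
      add_mem' := fun ha hb k => by
        rw [Matrix.mulVec_add, Matrix.mulVec_add, ha k, hb k, add_zero]
      zero_mem' := fun k => by simp
      smul_mem' := fun c z hz k => by
        rw [Matrix.mulVec_smul, Matrix.mulVec_smul, hz k, smul_zero] } with hWc
  have hmem : ∀ z, z ∈ Wc ↔ ∀ k : ℕ, Ac *ᵥ ((Bc ^ k) *ᵥ z) = 0 := fun z => Iff.rfl
  -- x complexified is in Wc
  set xc : Fin d → ℂ := fun i => (x i : ℂ) with hxcdef
  have hxmem : xc ∈ Wc := by
    intro k
    rw [hBc, map_pow_c, hAc, mulVec_map_ofReal, mulVec_map_ofReal, hW k]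
    ext i; simp
  have hxc : xc ≠ 0 := by
    intro h
    apply hx
    ext i
    have := congrFun h i
    simpa [hxcdef] using this
  haveI : Nontrivial Wc := nontrivial_of_ne ⟨xc, hxmem⟩ 0 (by
    intro h
    exact hxc (by simpa using congrArg Subtype.val h))
  -- restrict B to Wc
  have hmaps : ∀ z ∈ Wc, Bc.mulVecLin z ∈ Wc := by
    intro z hz k
    rw [Matrix.mulVecLin_apply, Matrix.mulVec_mulVec, Matrix.mulVec_mulVec, mul_assoc,
      ← pow_succ, ← Matrix.mulVec_mulVec]
    exact hz (k + 1)
  set f : Wc →ₗ[ℂ] Wc := (Matrix.mulVecLin Bc).restrict hmaps with hf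
  obtain ⟨μ, hμ⟩ := Module.End.exists_eigenvalue f
  obtain ⟨z', hz'⟩ := hμ.exists_hasEigenvector
  set z : Fin d → ℂ := (z' : Fin d → ℂ) with hzdef
  have hznz : z ≠ 0 := by
    intro h
    exact hz'.right (by
      apply Subtype.ext
      simpa [hzdef] using h)
  have heig : Bc *ᵥ z = μ • z := by
    have := hz'.apply_eq_smul
    have h2 := congrArg Subtype.val this
    rw [hf] at h2
    simpa [LinearMap.restrict_apply, Matrix.mulVecLin_apply, hzdef] using h2
  have hA0 : Ac *ᵥ z = 0 := by
    have := z'.2 0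
    simpa [Matrix.one_mulVec, hzdef] using this
  have hre : μ.re = 0 := by
    have hdot := eig_dot (d := d) B heig
    rw [hAc] at hA0
    rw [hA0, dotProduct_zero] at hdot
    rw [star_dot_self_eq] at hdot
    have hcne : (∑ i, Complex.normSq (z i)) ≠ 0 := by
      intro h
      apply hznz
      have : ∀ i, Complex.normSq (z i) = 0 := by
        intro i
        have hnn : ∀ j : Fin d, (0:ℝ) ≤ Complex.normSq (z j) := fun j => Complex.normSq_nonneg _
        have := (Finset.sum_eq_zero_iff_of_nonneg (fun j _ => hnn j)).mp h i (Finset.mem_univ i)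
        exact this
      ext i
      simpa [Complex.normSq_eq_zero] using this i
    have hsum : μ + (starRingEnd ℂ) μ = 0 := by
      have := hdot.symm
      rcases mul_eq_zero.mp this with h | h
      · exact h
      · exact absurd (by exact_mod_cast h) hcne
    have h2 : μ.re + μ.re = 0 := by
      simpa [Complex.add_re, Complex.conj_re] using congrArg Complex.re hsum
    linarith
  exact ⟨μ, mem_spectrum_of_eig hznz heig, hre⟩

lemma re_star_dot (A : Matrix (Fin d) (Fin d) ℝ) (z : Fin d → ℂ) :
    (star z ⬝ᵥ ((A.map cf) *ᵥ z)).re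
      = (fun i => (z i).re) ⬝ᵥ (A *ᵥ fun i => (z i).re)
        + (fun i => (z i).im) ⬝ᵥ (A *ᵥ fun i => (z i).im) := by
  have : ∀ i, (star z i * ((A.map cf) *ᵥ z) i).re
      = (z i).re * (A *ᵥ fun j => (z j).re) i + (z i).im * (A *ᵥ fun j => (z j).im) i := by
    intro i
    rw [show ((A.map cf) *ᵥ z) i = Complex.mk ((A *ᵥ fun j => (z j).re) i)
      ((A *ᵥ fun j => (z j).im) i) from Complex.ext (mulVec_map_re A z i) (mulVec_map_im A z i)]
    simp [Complex.mul_re, Complex.star_def, Complex.conj_re, Complex.conj_im]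
  rw [dotProduct, Complex.re_sum]
  simp only [Pi.star_apply] at this ⊢
  rw [Finset.sum_congr rfl (fun i _ => this i), Finset.sum_add_distrib]
  rfl

lemma exists_W_of_bad_eig {B : Matrix (Fin d) (Fin d) ℝ}
    (hB : ∀ x : Fin d → ℝ, x ⬝ᵥ ((Bᵀ + B).mulVec x) ≤ 0) {μ : ℂ}
    (hμ : μ ∈ spectrum ℂ (B.map cf)) (hre : 0 ≤ μ.re) :
    ∃ x : Fin d → ℝ, x ≠ 0 ∧ ∀ k : ℕ, (Bᵀ + B) *ᵥ ((B ^ k) *ᵥ x) = 0 := by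
  obtain ⟨z, hznz, heig⟩ := eig_of_mem_spectrum hμ
  set u : Fin d → ℝ := fun i => (z i).re with hu
  set v : Fin d → ℝ := fun i => (z i).im with hv
  set c : ℝ := ∑ i, Complex.normSq (z i) with hc
  have hcpos : 0 < c := by
    have hex : ∃ i, z i ≠ 0 := by
      by_contra h
      push_neg at h
      exact hznz (funext fun i => h i)
    obtain ⟨i, hi⟩ := hex
    exact Finset.sum_pos' (fun j _ => Complex.normSq_nonneg _)
      ⟨i, Finset.mem_univ i, Complex.normSq_pos.mpr hi⟩
  have hdot := eig_dot (d := d) B heig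
  have hrel : u ⬝ᵥ ((Bᵀ + B) *ᵥ u) + v ⬝ᵥ ((Bᵀ + B) *ᵥ v) = 2 * μ.re * c := by
    have h1 := congrArg Complex.re hdot
    rw [re_star_dot] at h1
    rw [star_dot_self_eq, Complex.add_conj] at h1
    rw [h1, ← hc]
    push_cast
    simp [Complex.mul_re]
  have hu0 : u ⬝ᵥ ((Bᵀ + B) *ᵥ u) = 0 ∧ v ⬝ᵥ ((Bᵀ + B) *ᵥ v) = 0 := by
    have h1 := hB u
    have h2 := hB v
    have h3 : 0 ≤ 2 * μ.re * c := by positivity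
    constructor <;> [skip; skip] <;> linarith [hrel]
  have hAu : (Bᵀ + B) *ᵥ u = 0 := ker_of_dot_zero hB hu0.1
  have hAv : (Bᵀ + B) *ᵥ v = 0 := ker_of_dot_zero hB hu0.2
  have hAz : ((Bᵀ + B).map cf) *ᵥ z = 0 := by
    ext i
    refine Complex.ext ?_ ?_
    · rw [mulVec_map_re]
      rw [← hu, hAu]
      simp
    · rw [mulVec_map_im]
      rw [← hv, hAv]
      simp
  have hpow : ∀ k : ℕ, (B.map cf) ^ k *ᵥ z = μ ^ k • z := by
    intro k
    induction k with
    | zero => simp [Matrix.one_mulVec]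
    | succ k ih =>
      rw [pow_succ, ← Matrix.mulVec_mulVec, heig, Matrix.mulVec_smul, ih, pow_succ]
      rw [smul_smul, mul_comm]
  have hkz : ∀ k : ℕ, ((Bᵀ + B).map cf) *ᵥ ((B.map cf) ^ k *ᵥ z) = 0 := by
    intro k
    rw [hpow k, Matrix.mulVec_smul, hAz, smul_zero]
  have hk : ∀ k : ℕ, (Bᵀ + B) *ᵥ ((B ^ k) *ᵥ u) = 0 ∧ (Bᵀ + B) *ᵥ ((B ^ k) *ᵥ v) = 0 := by
    intro k
    have h0 := hkz k
    rw [map_pow_c] at h0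
    have hwre : (fun j => (((B ^ k).map cf *ᵥ z) j).re) = (B ^ k) *ᵥ u := by
      ext j; exact mulVec_map_re (B ^ k) z j
    have hwim : (fun j => (((B ^ k).map cf *ᵥ z) j).im) = (B ^ k) *ᵥ v := by
      ext j; exact mulVec_map_im (B ^ k) z j
    constructor <;> ext i
    · have := congrArg (fun w => (w i).re) h0
      simp only [Pi.zero_apply, Complex.zero_re] at this
      rw [mulVec_map_re] at this
      rw [hwre] at this
      simpa using this
    · have := congrArg (fun w => (w i).im) h0
      simp only [Pi.zero_apply, Complex.zero_im] at this
      rw [mulVec_map_im] at this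
      rw [hwim] at this
      simpa using this
  by_cases hu0' : u = 0
  · refine ⟨v, ?_, fun k => (hk k).2⟩
    intro hv0
    apply hznz
    ext i
    refine Complex.ext ?_ ?_
    · simpa using congrFun hu0' i
    · simpa using congrFun hv0 i
  · exact ⟨u, hu0', fun k => (hk k).1⟩

end HurwitzAux

open HurwitzAux

/-- `B` is Hurwitz (every complex eigenvalue has negative real part) iff
`V = {x : ‖e^{tB}x‖ = ‖x‖ ∀ t}` is trivial. -/
theorem hurwitz_iff_norm_preserved_trivial {d : ℕ} (B : Matrix (Fin d) (Fin d) ℝ)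
    (hB : ∀ x : Fin d → ℝ, x ⬝ᵥ ((Bᵀ + B).mulVec x) ≤ 0) :
    (∀ μ ∈ spectrum ℂ (B.map (fun r => (r : ℂ))), μ.re < 0) ↔
      (∀ x : Fin d → ℝ,
        (∀ t : ℝ, eNorm ((NormedSpace.exp (t • B)).mulVec x) = eNorm x) → x = 0) := by
  constructor
  · intro hH x hx
    by_contra hx0
    have hW := (analysis_main B hB x).mp hx
    obtain ⟨μ, hμspec, hμre⟩ := exists_imaginary_eig hx0 hW
    have := hH μ hμspec
    rw [hμre] at this
    exact lt_irrefl 0 this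
  · intro hV μ hμ
    by_contra hlt
    push_neg at hlt
    obtain ⟨x, hx0, hW⟩ := exists_W_of_bad_eig hB hμ hlt
    have hx := (analysis_main B hB x).mpr hW
    exact hx0 (hV x hx)
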